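/- For every n ≥ 1, every deterministic bottom-up finite tree automaton recognizing L_n (the language of terms over {f(,), a} with at least one root-to-leaf path of length n) has at least 2^n states. Hence the size of the smallest ↑-DFTA recognizing L_n is exponential in n, while L_n is recognized by a ↑-RFTA with n+2 states. -/

import Mathlib

/-- Terms over a ranked alphabet `F` with arity function `arity`. -/
inductive Term (F : Type) (arity : F → ℕ) : Type where
  | node (f : F) (children : Fin (arity f) → Term F arity) : Term F arity

/-- Contexts: terms with exactly one occurrence of the hole `◇`. -/
inductive Ctx (F : Type) (arity : F → ℕ) : Type where
  | hole : Ctx F arity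
  | node (f : F) (i : Fin (arity f)) (c : Ctx F arity)
      (sib : (j : Fin (arity f)) → j ≠ i → Term F arity) : Ctx F arity

/-- `c.fill t` replaces the hole of `c` by the term `t`. -/
def Ctx.fill {F : Type} {arity : F → ℕ} : Ctx F arity → Term F arity → Term F arity
  | .hole, t => t
  | .node f i c sib, t => .node f (fun j => if h : j = i then c.fill t else sib j h)

/-- Bottom-up residual of the tree language `L` w.r.t. the term `t`:
the set of contexts `c` with `c[t] ∈ L`. -/
def bres {F : Type} {arity : F → ℕ} (L : Set (Term F arity)) (t : Term F arity) :
    Set (Ctx F arity) := {c | c.fill t ∈ L}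

/-- Bottom-up finite tree automaton with state type `Q`:
final states and a set of rules `f(q₁,…,qₙ) → q`. -/
structure BUTA (F : Type) (arity : F → ℕ) (Q : Type) where
  final : Set Q
  rules : (f : F) → (Fin (arity f) → Q) → Q → Prop

/-- Reachability `t →*_A q`. -/
inductive BUTA.Reach {F Q : Type} {arity : F → ℕ} (A : BUTA F arity Q) :
    Term F arity → Q → Prop
  | node {f : F} {ch : Fin (arity f) → Term F arity} {qs : Fin (arity f) → Q} {q : Q} :
      A.rules f qs q → (∀ i, A.Reach (ch i) (qs i)) → A.Reach (.node f ch) q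

/-- Language recognized by a bottom-up tree automaton. -/
def BUTA.lang {F Q : Type} {arity : F → ℕ} (A : BUTA F arity Q) : Set (Term F arity) :=
  {t | ∃ q ∈ A.final, A.Reach t q}

/-- `A.CReach q0 c q` : putting state `q0` in the hole of `c`, the automaton can reach `q`
at the root (extending `→*_A` to terms over `F ∪ Q` by `q →*_A q`). -/
inductive BUTA.CReach {F Q : Type} {arity : F → ℕ} (A : BUTA F arity Q) (q0 : Q) :
    Ctx F arity → Q → Prop
  | hole : A.CReach q0 .hole q0
  | node {f : F} {i : Fin (arity f)} {c : Ctx F arity}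
      {sib : (j : Fin (arity f)) → j ≠ i → Term F arity}
      {qs : Fin (arity f) → Q} {q : Q} :
      A.rules f qs q → A.CReach q0 c (qs i) →
      (∀ j (h : j ≠ i), A.Reach (sib j h) (qs j)) →
      A.CReach q0 (.node f i c sib) q

/-- State language `C_q`: the set of contexts accepted by the state `q`. -/
def BUTA.stateLang {F Q : Type} {arity : F → ℕ} (A : BUTA F arity Q) (q : Q) :
    Set (Ctx F arity) := {c | ∃ qf ∈ A.final, A.CReach q c qf}

/-- A bottom-up automaton is deterministic iff no two rules share a left-hand side. -/
def BUTA.Deterministic {F Q : Type} {arity : F → ℕ} (A : BUTA F arity Q) : Prop :=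
  ∀ (f : F) (qs : Fin (arity f) → Q) (q q' : Q), A.rules f qs q → A.rules f qs q' → q = q'

/-- Bottom-up residual finite tree automaton: each state language is a residual of `L(A)`. -/
def IsRFTA {F Q : Type} {arity : F → ℕ} (A : BUTA F arity Q) : Prop :=
  ∀ q : Q, ∃ t : Term F arity, A.stateLang q = bres A.lang t
/-- The ranked alphabet `{f(,), a}`. -/
inductive Symb : Type where
  | f : Symb
  | a : Symb

@[reducible] def ar : Symb → ℕ
  | .f => 2
  | .a => 0

/-- The multiset of lengths (numbers of edges) of all root-to-leaf paths of a term. -/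
def leafDepths : Term Symb ar → Multiset ℕ
  | .node .a _ => {0}
  | .node .f ch =>
      ((leafDepths (ch 0)).map (· + 1)) + ((leafDepths (ch 1)).map (· + 1))

/-- `L_n`: terms over `{f(,), a}` with at least one root-to-leaf path of length `n`. -/
def Ln (n : ℕ) : Set (Term Symb ar) := {t | n ∈ leafDepths t}

/-- States of `A_n`: `none` is `q_*`, `some k` is `q_k` for `0 ≤ k ≤ n`. -/
abbrev Qn (n : ℕ) : Type := Option (Fin (n + 1))

def AnRules (n : ℕ) : (g : Symb) → (Fin (ar g) → Qn n) → Qn n → Prop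
  | .a, _, q => q = none ∨ q = some (Fin.last n)
  | .f, qs, q =>
      (qs 0 = none ∧ qs 1 = none ∧ q = none) ∨
      (∃ k, ∃ _h1 : 1 ≤ k, ∃ h2 : k ≤ n,
        ((qs 0 = some ⟨k, Nat.lt_succ_of_le h2⟩ ∧ qs 1 ≠ some ⟨0, Nat.succ_pos n⟩) ∨
         (qs 1 = some ⟨k, Nat.lt_succ_of_le h2⟩ ∧ qs 0 ≠ some ⟨0, Nat.succ_pos n⟩)) ∧
        (q = some ⟨k - 1, by omega⟩ ∨ q = none))

/-- The automaton `A_n`. -/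
def An (n : ℕ) : BUTA Symb ar (Qn n) where
  final := {some ⟨0, Nat.succ_pos n⟩}
  rules := AnRules n


section General
variable {F Q : Type} {arity : F → ℕ} {A : BUTA F arity Q}

theorem reach_fill {t : Term F arity} {q0 q : Q} {c : Ctx F arity}
    (hc : A.CReach q0 c q) (ht : A.Reach t q0) : A.Reach (c.fill t) q := by
  induction hc with
  | hole => exact ht
  | @node f i c sib qs q hr _ hs ih =>
    refine BUTA.Reach.node hr (fun j => ?_)
    by_cases h : j = i
    · subst h; simpa [Ctx.fill] using ih
    · simpa [Ctx.fill, h] using hs j h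

theorem fill_decompose : ∀ (c : Ctx F arity) (t : Term F arity) (q : Q),
    A.Reach (c.fill t) q → ∃ q0, A.Reach t q0 ∧ A.CReach q0 c q := by
  intro c
  induction c with
  | hole => exact fun t q h => ⟨q, h, .hole⟩
  | node f i c sib ih =>
    intro t q h
    rw [show (Ctx.node f i c sib).fill t
        = .node f (fun j => if h : j = i then c.fill t else sib j h) from rfl] at h
    cases h with
    | node hr hch =>
      obtain ⟨q0, ht, hc⟩ := ih t _ (by simpa using hch i)
      exact ⟨q0, ht, .node hr hc (fun j hj => by simpa [hj] using hch j)⟩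

theorem reach_unique (hdet : A.Deterministic) {t : Term F arity} {q : Q}
    (h : A.Reach t q) : ∀ q', A.Reach t q' → q = q' := by
  induction h with
  | @node f ch qs q hr hch ih =>
    intro q' h'
    cases h' with
    | @node _ _ qs' _ hr' hch' =>
      have hqs : qs = qs' := funext fun i => ih i _ (hch' i)
      exact hdet _ _ _ _ hr (hqs ▸ hr')

end General

/-- The constant term `a`. -/
def aT : Term Symb ar := .node .a (fun i => i.elim0)

@[simp] theorem leafDepths_aT : leafDepths aT = {0} := rfl

/-- A chain of `f`s with the hole leftmost and `a`-siblings. -/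
def chainCtx : ℕ → Ctx Symb ar
  | 0 => .hole
  | d+1 => .node .f 0 (chainCtx d) (fun _ _ => aT)

theorem mem_chain_fill (t : Term Symb ar) : ∀ (d m : ℕ),
    (m ∈ leafDepths ((chainCtx d).fill t) ↔
      (∃ m', m' ∈ leafDepths t ∧ m = m' + d) ∨ (1 ≤ m ∧ m ≤ d)) := by
  intro d
  induction d with
  | zero => intro m; simp [chainCtx, Ctx.fill]; omega
  | succ d ih =>
    intro m
    rw [show (chainCtx (d+1)).fill t
        = .node .f (fun j => if h : j = (0 : Fin 2) then (chainCtx d).fill t else aT)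
        from rfl]
    simp only [leafDepths, Multiset.mem_add, Multiset.mem_map, dif_pos rfl, dite_true,
      dif_neg (show ¬ (1 : Fin 2) = 0 by decide), leafDepths_aT, Multiset.mem_singleton]
    constructor
    · rintro (⟨x, hx, rfl⟩ | ⟨x, hx, rfl⟩)
      · rcases (ih x).1 hx with ⟨m', hm', rfl⟩ | h
        · exact Or.inl ⟨m', hm', by omega⟩
        · exact Or.inr ⟨by omega, by omega⟩
      · subst hx; exact Or.inr ⟨le_refl 1, by omega⟩
    · rintro (⟨m', hm', rfl⟩ | ⟨h1, h2⟩)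
      · exact Or.inl ⟨m' + d, (ih _).2 (Or.inl ⟨m', hm', rfl⟩), by omega⟩
      · by_cases hm : m = 1
        · exact Or.inr ⟨0, rfl, by omega⟩
        · exact Or.inl ⟨m - 1, (ih _).2 (Or.inr ⟨by omega, by omega⟩), by omega⟩

/-- Term whose leaf depths below the (virtual) depth `j` realize the set `S`,
with an extra path of length `m` (intended: `m = n+1-j`). -/
def TB (S : Finset ℕ) : ℕ → ℕ → Term Symb ar
  | 0, _ => aT
  | m+1, j => .node .f (fun i => if i = (0 : Fin 2) then TB S m (j+1)
      else (if (j+1) ∈ S then aT else TB S m (j+1)))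

theorem mem_TB (S : Finset ℕ) : ∀ (m j d : ℕ),
    d ∈ leafDepths (TB S m j) ↔ (d = m ∨ (1 ≤ d ∧ d ≤ m ∧ (j + d) ∈ S)) := by
  intro m
  induction m with
  | zero => intro j d; simp [TB]; omega
  | succ m ih =>
    intro j d
    rw [show TB S (m+1) j = .node .f (fun i => if i = (0 : Fin 2) then TB S m (j+1)
      else (if (j+1) ∈ S then aT else TB S m (j+1))) from rfl]
    simp only [leafDepths, Multiset.mem_add, Multiset.mem_map, if_pos rfl, ite_true]
    rw [if_neg (by decide : ¬ (1 : Fin 2) = 0)]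
    by_cases hS : (j+1) ∈ S
    · rw [if_pos hS]
      simp only [leafDepths_aT, Multiset.mem_singleton]
      constructor
      · rintro (⟨x, hx, rfl⟩ | ⟨x, hx, rfl⟩)
        · rcases (ih (j+1) x).1 hx with rfl | ⟨h1, h2, h3⟩
          · exact Or.inl rfl
          · exact Or.inr ⟨by omega, by omega, by
              have : j + 1 + x = j + (x + 1) := by omega
              rwa [this] at h3⟩
        · subst hx; exact Or.inr ⟨le_refl 1, by omega, by simpa using hS⟩
      · rintro (rfl | ⟨h1, h2, h3⟩)
        · exact Or.inl ⟨m, (ih (j+1) m).2 (Or.inl rfl), rfl⟩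
        · by_cases hd : d = 1
          · subst hd; exact Or.inr ⟨0, rfl, rfl⟩
          · refine Or.inl ⟨d - 1, (ih (j+1) (d-1)).2 (Or.inr ⟨by omega, by omega, ?_⟩), by omega⟩
            have : j + 1 + (d - 1) = j + d := by omega
            rwa [this]
    · rw [if_neg hS]
      constructor
      · rintro (⟨x, hx, rfl⟩ | ⟨x, hx, rfl⟩) <;>
        · rcases (ih (j+1) x).1 hx with rfl | ⟨h1, h2, h3⟩
          · exact Or.inl rfl
          · exact Or.inr ⟨by omega, by omega, by
              have : j + 1 + x = j + (x + 1) := by omega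
              rwa [this] at h3⟩
      · rintro (rfl | ⟨h1, h2, h3⟩)
        · exact Or.inl ⟨m, (ih (j+1) m).2 (Or.inl rfl), rfl⟩
        · have hd : d ≠ 1 := by rintro rfl; exact hS (by simpa using h3)
          refine Or.inl ⟨d - 1, (ih (j+1) (d-1)).2 (Or.inr ⟨by omega, by omega, ?_⟩), by omega⟩
          have : j + 1 + (d - 1) = j + d := by omega
          rwa [this]

/-- The separating term for a subset `S ⊆ {1,…,n}`. -/
def tS (n : ℕ) (S : Finset ℕ) : Term Symb ar := TB S (n+1) 0

theorem mem_tS (n : ℕ) (S : Finset ℕ) (hS : S ⊆ Finset.Icc 1 n) (d : ℕ) :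
    d ∈ leafDepths (tS n S) ↔ (d = n + 1 ∨ d ∈ S) := by
  rw [tS, mem_TB]
  constructor
  · rintro (rfl | ⟨_, _, h⟩)
    · exact Or.inl rfl
    · exact Or.inr (by simpa using h)
  · rintro (rfl | h)
    · exact Or.inl rfl
    · have := Finset.mem_Icc.1 (hS h)
      exact Or.inr ⟨this.1, by omega, by simpa using h⟩

theorem part1 (n : ℕ) (hn : 1 ≤ n) (Q : Type) [Fintype Q] (A : BUTA Symb ar Q)
    (hdet : A.Deterministic) (hlang : A.lang = Ln n) : 2 ^ n ≤ Fintype.card Q := by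
  -- every term reaches some state
  have total : ∀ t : Term Symb ar, ∃ q, A.Reach t q := by
    intro t
    have h1 : (chainCtx n).fill t ∈ Ln n := by
      rw [Ln, Set.mem_setOf_eq, mem_chain_fill]
      exact Or.inr ⟨hn, le_refl n⟩
    rw [← hlang] at h1
    obtain ⟨qf, _, hr⟩ := h1
    obtain ⟨q0, ht, _⟩ := fill_decompose _ _ _ hr
    exact ⟨q0, ht⟩
  -- separation
  have sep : ∀ (S1 S2 : Finset ℕ), S1 ⊆ Finset.Icc 1 n → S2 ⊆ Finset.Icc 1 n →
      ∀ k, k ∈ S1 → k ∉ S2 → ∀ q, A.Reach (tS n S1) q → A.Reach (tS n S2) q → False := by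
    intro S1 S2 hS1 hS2 k hk1 hk2 q hr1 hr2
    have hkIcc := Finset.mem_Icc.1 (hS1 hk1)
    have h1 : (chainCtx (n - k)).fill (tS n S1) ∈ Ln n := by
      rw [Ln, Set.mem_setOf_eq, mem_chain_fill]
      exact Or.inl ⟨k, (mem_tS n S1 hS1 k).2 (Or.inr hk1), by omega⟩
    rw [← hlang] at h1
    obtain ⟨qf, hqf, hr⟩ := h1
    obtain ⟨q0, ht, hc⟩ := fill_decompose _ _ _ hr
    have hq0 : q0 = q := reach_unique hdet ht q hr1
    subst hq0
    have h2 : A.Reach ((chainCtx (n - k)).fill (tS n S2)) qf := reach_fill hc hr2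
    have h2' : (chainCtx (n - k)).fill (tS n S2) ∈ Ln n := hlang ▸ ⟨qf, hqf, h2⟩
    rw [Ln, Set.mem_setOf_eq, mem_chain_fill] at h2'
    rcases h2' with ⟨m', hm', hmeq⟩ | ⟨_, h⟩
    · rcases (mem_tS n S2 hS2 m').1 hm' with rfl | hmem
      · omega
      · have : m' = k := by omega
        exact hk2 (this ▸ hmem)
    · omega
  -- the injection
  classical
  set P : Finset (Finset ℕ) := (Finset.Icc 1 n).powerset with hP
  let φ : Finset ℕ → Q := fun S => Classical.choose (total (tS n S))
  have hφ : ∀ S, A.Reach (tS n S) (φ S) := fun S => Classical.choose_spec (total (tS n S))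
  have hinj : Set.InjOn φ P := by
    intro S1 h1 S2 h2 heq
    by_contra hne
    rcases Finset.not_subset.1 (fun hsub => hne (Finset.Subset.antisymm hsub
      (fun x hx => by
        by_contra hx1
        exact sep S2 S1 (Finset.mem_powerset.1 h2) (Finset.mem_powerset.1 h1) x hx hx1 _
          (hφ S2) (heq ▸ hφ S1)))) with ⟨k, hk1, hk2⟩
    exact sep S1 S2 (Finset.mem_powerset.1 h1) (Finset.mem_powerset.1 h2) k hk1 hk2 _
      (hφ S1) (heq ▸ hφ S2)
  have hcard := Finset.card_le_card_of_injOn φ (fun a _ => Finset.mem_univ (φ a)) hinj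
  rw [Finset.card_univ, hP, Finset.card_powerset, Nat.card_Icc] at hcard
  simpa using hcard

/-- The residual automaton `B_n`: `some k` means "has a path of length exactly `k`",
`none` is a universal sink state. It counts path lengths bottom-up from the leaves. -/
def Bn (n : ℕ) : BUTA Symb ar (Qn n) where
  final := {some (Fin.last n)}
  rules := fun g => match g with
    | .a => fun _ q => q = none ∨ q = some ⟨0, n.succ_pos⟩
    | .f => fun qs q => q = none ∨
        ∃ (i : Fin 2) (k : ℕ) (h : k < n),
          qs i = some ⟨k, by omega⟩ ∧ q = some ⟨k + 1, by omega⟩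

theorem Bn_rules_a {n : ℕ} (qs : Fin 0 → Qn n) (q : Qn n) :
    (Bn n).rules .a qs q ↔ (q = none ∨ q = some ⟨0, n.succ_pos⟩) := Iff.rfl

theorem Bn_rules_f {n : ℕ} (qs : Fin 2 → Qn n) (q : Qn n) :
    (Bn n).rules .f qs q ↔ (q = none ∨
      ∃ (i : Fin 2) (k : ℕ) (h : k < n),
        qs i = some ⟨k, by omega⟩ ∧ q = some ⟨k + 1, by omega⟩) := Iff.rfl

theorem Bn_reach_none (n : ℕ) : ∀ t : Term Symb ar, (Bn n).Reach t none := by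
  intro t
  induction t with
  | node g ch ih =>
    cases g with
    | a =>
      refine BUTA.Reach.node (f := Symb.a) (ch := ch) (qs := fun i => i.elim0) ?_ (fun i => i.elim0)
      exact (Bn_rules_a _ _).2 (Or.inl rfl)
    | f =>
      refine BUTA.Reach.node (qs := fun _ => none) ?_ (fun i => ih i)
      exact (Bn_rules_f _ _).2 (Or.inl rfl)

theorem Bn_reach_of_mem (n : ℕ) : ∀ (t : Term Symb ar) (k : ℕ) (hk : k < n + 1),
    k ∈ leafDepths t → (Bn n).Reach t (some ⟨k, hk⟩) := by
  intro t
  induction t with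
  | node g ch ih =>
    cases g with
    | a =>
      intro k hk hmem
      have hk0 : k = 0 := by simpa [leafDepths] using hmem
      subst hk0
      refine BUTA.Reach.node (f := Symb.a) (ch := ch) (qs := fun i => i.elim0) ?_ (fun i => i.elim0)
      exact (Bn_rules_a _ _).2 (Or.inr rfl)
    | f =>
      intro k hk hmem
      simp only [leafDepths, Multiset.mem_add, Multiset.mem_map] at hmem
      rcases hmem with ⟨x, hx, rfl⟩ | ⟨x, hx, rfl⟩
      · refine BUTA.Reach.node (qs := fun j => if j = 0 then some ⟨x, by omega⟩ else none)
          ?_ (fun i => ?_)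
        · exact (Bn_rules_f _ _).2 (Or.inr ⟨0, x, by omega, by simp, rfl⟩)
        · by_cases h : i = 0
          · subst h; simpa using ih 0 x (by omega) hx
          · simpa [h] using Bn_reach_none n (ch i)
      · refine BUTA.Reach.node (qs := fun j => if j = 1 then some ⟨x, by omega⟩ else none)
          ?_ (fun i => ?_)
        · exact (Bn_rules_f _ _).2 (Or.inr ⟨1, x, by omega, by simp, rfl⟩)
        · by_cases h : i = 1
          · subst h; simpa using ih 1 x (by omega) hx
          · simpa [h] using Bn_reach_none n (ch i)

theorem Bn_mem_of_reach (n : ℕ) {t : Term Symb ar} {q : Qn n}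
    (h : (Bn n).Reach t q) : ∀ (j : Fin (n+1)), q = some j → (j : ℕ) ∈ leafDepths t := by
  induction h with
  | @node g ch qs q hr hch ih =>
    cases g with
    | a =>
      rintro j rfl
      rcases (Bn_rules_a qs _).1 hr with h | h
      · exact absurd h (by simp)
      · have hj : (j : ℕ) = 0 := congrArg Fin.val (Option.some.inj h)
        simp [leafDepths, hj]
    | f =>
      rintro j rfl
      rcases (Bn_rules_f qs _).1 hr with h | ⟨i, k, hkn, hqi, hq⟩
      · exact absurd h (by simp)
      · have hj : (j : ℕ) = k + 1 := congrArg Fin.val (Option.some.inj hq)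
        have hx : k ∈ leafDepths (ch i) := by simpa using ih i ⟨k, by omega⟩ hqi
        simp only [leafDepths, Multiset.mem_add, Multiset.mem_map]
        have hi : i = 0 ∨ i = 1 := by rcases i with ⟨iv, hiv⟩; interval_cases iv <;> simp
        rcases hi with rfl | rfl
        · exact Or.inl ⟨k, hx, by omega⟩
        · exact Or.inr ⟨k, hx, by omega⟩

/-- Perfect binary tree of depth `d`. -/
def perfect : ℕ → Term Symb ar
  | 0 => aT
  | d+1 => .node .f (fun _ => perfect d)

theorem mem_perfect : ∀ d m : ℕ, m ∈ leafDepths (perfect d) ↔ m = d := by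
  intro d
  induction d with
  | zero => intro m; simp [perfect]
  | succ d ih =>
    intro m
    rw [show perfect (d+1) = .node .f (fun _ => perfect d) from rfl]
    simp only [leafDepths, Multiset.mem_add, Multiset.mem_map]
    constructor
    · rintro (⟨x, hx, rfl⟩ | ⟨x, hx, rfl⟩) <;> rw [(ih x).1 hx]
    · rintro rfl; exact Or.inl ⟨d, (ih d).2 rfl, rfl⟩

theorem Bn_lang (n : ℕ) : (Bn n).lang = Ln n := by
  ext t
  constructor
  · rintro ⟨q, hq, hr⟩
    have hq' : q = some (Fin.last n) := hq
    exact Bn_mem_of_reach n hr (Fin.last n) hq'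
  · intro ht
    exact ⟨some (Fin.last n), rfl, Bn_reach_of_mem n t n n.lt_succ_self ht⟩

/-- Any state can reach `none` at the top of any non-hole context. -/
theorem Bn_creach_star (n : ℕ) : ∀ (c : Ctx Symb ar) (q0 : Qn n),
    c = .hole ∨ (Bn n).CReach q0 c none := by
  intro c
  induction c with
  | hole => exact fun _ => Or.inl rfl
  | node g i c sib ih =>
    intro q0
    cases g with
    | a => exact i.elim0
    | f =>
      refine Or.inr ?_
      rcases ih q0 with rfl | hc
      · exact .node (qs := fun j => if j = i then q0 else none)
          ((Bn_rules_f _ _).2 (Or.inl rfl))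
          (by simp [BUTA.CReach.hole])
          (fun j hj => by simpa [hj] using Bn_reach_none n (sib j hj))
      · exact .node (qs := fun _ => none)
          ((Bn_rules_f _ _).2 (Or.inl rfl)) (by simpa using hc)
          (fun j hj => Bn_reach_none n (sib j hj))

/-- If the universal state `none` accepts a context (to a non-`none` result),
then every state does. -/
theorem Bn_creach_mono (n : ℕ) {c : Ctx Symb ar} {q : Qn n}
    (h : (Bn n).CReach none c q) : q = none ∨ ∀ q0, (Bn n).CReach q0 c q := by
  induction h with
  | hole => exact Or.inl rfl
  | @node g i c sib qs q hr hc hs ih =>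
    cases g with
    | a => exact i.elim0
    | f =>
      rcases (Bn_rules_f qs q).1 hr with rfl | ⟨io, k, hkn, hqio, rfl⟩
      · exact Or.inl rfl
      · refine Or.inr (fun q0 => ?_)
        rcases ih with hqsi | hall
        · -- the counting child is the sibling
          have hio : io ≠ i := by rintro rfl; rw [hqsi] at hqio; exact absurd hqio (by simp)
          rcases Bn_creach_star n c q0 with rfl | hstar
          · refine .node (qs := fun j => if j = i then q0 else qs j) ?_ (by simp [BUTA.CReach.hole])
              (fun j hj => by simpa [hj] using hs j hj)
            exact (Bn_rules_f _ _).2 (Or.inr ⟨io, k, hkn, by simpa [hio] using hqio, rfl⟩)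
          · refine .node (qs := fun j => if j = i then none else qs j) ?_ (by simpa using hstar)
              (fun j hj => by simpa [hj] using hs j hj)
            exact (Bn_rules_f _ _).2 (Or.inr ⟨io, k, hkn, by simpa [hio] using hqio, rfl⟩)
        · exact .node hr (hall q0) hs

theorem Bn_stateLang_some (n : ℕ) (k : ℕ) (hk : k < n + 1) :
    (Bn n).stateLang (some ⟨k, hk⟩) = bres (Bn n).lang (perfect k) := by
  ext c
  constructor
  · rintro ⟨qf, hqf, hc⟩
    exact ⟨qf, hqf, reach_fill hc (Bn_reach_of_mem n (perfect k) k hk ((mem_perfect k k).2 rfl))⟩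
  · rintro ⟨qf, hqf, hr⟩
    obtain ⟨q0, ht, hc⟩ := fill_decompose _ _ _ hr
    have hqf' : qf = some (Fin.last n) := hqf
    subst hqf'
    rcases q0 with _ | j
    · rcases Bn_creach_mono n hc with h | hall
      · exact absurd h (by simp)
      · exact ⟨some (Fin.last n), rfl, hall _⟩
    · have hj : (j : ℕ) = k := (mem_perfect k j).1 (Bn_mem_of_reach n ht j rfl)
      have : j = ⟨k, hk⟩ := Fin.ext hj
      subst this
      exact ⟨some (Fin.last n), rfl, hc⟩

theorem Bn_stateLang_none (n : ℕ) :
    (Bn n).stateLang none = bres (Bn n).lang (perfect (n + 1)) := by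
  ext c
  constructor
  · rintro ⟨qf, hqf, hc⟩
    exact ⟨qf, hqf, reach_fill hc (Bn_reach_none n (perfect (n + 1)))⟩
  · rintro ⟨qf, hqf, hr⟩
    obtain ⟨q0, ht, hc⟩ := fill_decompose _ _ _ hr
    rcases q0 with _ | j
    · exact ⟨qf, hqf, hc⟩
    · have hj : (j : ℕ) = n + 1 := (mem_perfect (n + 1) j).1 (Bn_mem_of_reach n ht j rfl)
      exact absurd hj (by omega)

theorem Bn_isRFTA (n : ℕ) : IsRFTA (Bn n) := by
  rintro (_ | j)
  · exact ⟨perfect (n + 1), Bn_stateLang_none n⟩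
  · exact ⟨perfect j, by
      rw [show (some j : Qn n) = some ⟨(j : ℕ), j.isLt⟩ from rfl]
      exact Bn_stateLang_some n j j.isLt⟩
/-- For every `n ≥ 1`, every deterministic bottom-up FTA recognizing
`L_n` has at least `2^n` states, while `L_n` is recognized by some ↑-RFTA with `n+2`
states. -/
theorem dfta_for_Ln_needs_exp_states (n : ℕ) (hn : 1 ≤ n) :
    (∀ (Q : Type) [Fintype Q] (A : BUTA Symb ar Q),
      A.Deterministic → A.lang = Ln n → 2 ^ n ≤ Fintype.card Q) ∧
    (∃ (Q : Type) (_ : Fintype Q) (A : BUTA Symb ar Q),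
      IsRFTA A ∧ A.lang = Ln n ∧ Fintype.card Q = n + 2) := by
  constructor
  · intro Q _ A hdet hlang
    exact part1 n hn Q A hdet hlang
  · refine ⟨Qn n, inferInstance, Bn n, Bn_isRFTA n, Bn_lang n, ?_⟩
    simp [Qn]
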